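/- arXiv:1702.04067 — 2 statements merged into one kernel-verified Lean document; each statement's English description precedes it below -/
import Mathlib

section
/- For any Boolean functions f (and 0-goal function g0, 1-goal function g1 for f with goal values Q0, Q1 respectively), the function g(b) = Q1·Q0 − (Q1 − g1(b))(Q0 − g0(b)) is a monotone submodular function with g(b) = Q1·Q0 iff g1(b)=Q1 or g0(b)=Q0. Consequently Γ(f) ≤ Γ^1(f)·Γ^0(f). -/
attribute [local instance] Classical.propDecidable

/-- `b'` extends the partial assignment `b`: it agrees on all non-`*` coordinates of `b`. -/
def Extends {n : ℕ} (b' b : Fin n → Option Bool) : Prop :=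
  ∀ i v, b i = some v → b' i = some v

/-- A total assignment `x` extends the partial assignment `b`. -/
def TExtends {n : ℕ} (x : Fin n → Bool) (b : Fin n → Option Bool) : Prop :=
  ∀ i v, b i = some v → x i = v

/-- `b` is a certificate of `f`: `f` is constant on all total extensions of `b`. -/
def IsCert {n : ℕ} (f : (Fin n → Bool) → Bool) (b : Fin n → Option Bool) : Prop :=
  ∀ x y, TExtends x b → TExtends y b → f x = f y

/-- `b` is a `k`-certificate of `f`: it forces `f` to the value `k`. -/
def IsKCert {n : ℕ} (f : (Fin n → Bool) → Bool) (k : Bool) (b : Fin n → Option Bool) : Prop :=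
  ∀ x, TExtends x b → f x = k

/-- A certificate is minimal if no proper restriction of it is a certificate. -/
def MinCert {n : ℕ} (f : (Fin n → Bool) → Bool) (c : Fin n → Option Bool) : Prop :=
  IsCert f c ∧ ∀ c', Extends c c' → c' ≠ c → ¬ IsCert f c'

/-- A `k`-certificate is minimal if no proper restriction of it is a `k`-certificate. -/
def MinKCert {n : ℕ} (f : (Fin n → Bool) → Bool) (k : Bool) (c : Fin n → Option Bool) : Prop :=
  IsKCert f k c ∧ ∀ c', Extends c c' → c' ≠ c → ¬ IsKCert f k c'

/-- Monotone utility function: filling in `*`'s never decreases the value. -/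
def Mono {n : ℕ} (g : (Fin n → Option Bool) → ℕ) : Prop :=
  ∀ b b', Extends b' b → g b ≤ g b'

/-- Submodular utility function: marginal gains shrink under extension. -/
def Submod {n : ℕ} (g : (Fin n → Option Bool) → ℕ) : Prop :=
  ∀ b b' (i : Fin n) (ℓ : Bool), Extends b' b → b i = none → b' i = none →
    g (Function.update b' i (some ℓ)) + g b ≤ g (Function.update b i (some ℓ)) + g b'

/-- `g` is a goal function for `f` with goal value `Q`. -/
def GoalFn {n : ℕ} (f : (Fin n → Bool) → Bool) (g : (Fin n → Option Bool) → ℕ)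
    (Q : ℕ) : Prop :=
  Mono g ∧ Submod g ∧ ∀ b, g b = Q ↔ IsCert f b

/-- `g` is a `k`-goal function for `f` with goal value `Q`. -/
def KGoalFn {n : ℕ} (f : (Fin n → Bool) → Bool) (k : Bool)
    (g : (Fin n → Option Bool) → ℕ) (Q : ℕ) : Prop :=
  Mono g ∧ Submod g ∧ (∀ b, IsKCert f k b → g b = Q) ∧ (∀ b, ¬ IsKCert f k b → g b < Q)

/-- The goal value `Γ(f)`: the minimum goal value of any goal function for `f`. -/
noncomputable def gamma {n : ℕ} (f : (Fin n → Bool) → Bool) : ℕ :=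
  sInf {Q | ∃ g, GoalFn f g Q}

/-- The `k`-goal value `Γ^k(f)`. -/
noncomputable def gammaK {n : ℕ} (f : (Fin n → Bool) → Bool) (k : Bool) : ℕ :=
  sInf {Q | ∃ g, KGoalFn f k g Q}

/-- The weight of a partial assignment: the number of non-`*` coordinates. -/
noncomputable def wt {n : ℕ} (b : Fin n → Option Bool) : ℕ :=
  (Finset.univ.filter (fun i => (b i).isSome)).card

/-- `f` depends on its `i`-th variable. -/
def DependsOnVar {n : ℕ} (f : (Fin n → Bool) → Bool) (i : Fin n) : Prop :=
  ∃ x, f (Function.update x i true) ≠ f (Function.update x i false)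

lemma kgoal_le {n : ℕ} {f : (Fin n → Bool) → Bool} {k : Bool}
    {g : (Fin n → Option Bool) → ℕ} {Q : ℕ} (h : KGoalFn f k g Q)
    (b : Fin n → Option Bool) : g b ≤ Q := by
  by_cases hc : IsKCert f k b
  · exact (h.2.2.1 b hc).le
  · exact (h.2.2.2 b hc).le

lemma extends_update {n : ℕ} (b : Fin n → Option Bool) (i : Fin n) (ℓ : Bool)
    (hb : b i = none) : Extends (Function.update b i (some ℓ)) b := by
  intro j v hj
  rcases eq_or_ne j i with rfl | h
  · rw [hb] at hj; exact absurd hj (by simp)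
  · rw [Function.update_of_ne h]; exact hj

lemma extends_update_mono {n : ℕ} {b b' : Fin n → Option Bool} (i : Fin n) (ℓ : Bool)
    (h : Extends b' b) :
    Extends (Function.update b' i (some ℓ)) (Function.update b i (some ℓ)) := by
  intro j v hj
  rcases eq_or_ne j i with rfl | hne
  · rw [Function.update_self] at hj ⊢; exact hj
  · rw [Function.update_of_ne hne] at hj ⊢; exact h j v hj

lemma key_arith (c d C D c' d' C' D' : ℕ) (h1 : c' ≤ c) (h2 : d' ≤ d)
    (h3 : C' ≤ C) (h4 : D' ≤ D) :
    c * C + (c' + d') * (C' + D') ≤ c' * C' + (c + d) * (C + D) := by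
  nlinarith [Nat.mul_le_mul h1 h4, Nat.mul_le_mul h2 h3, Nat.mul_le_mul h2 h4]

lemma combo {n : ℕ} (f : (Fin n → Bool) → Bool)
    (g0 g1 : (Fin n → Option Bool) → ℕ) (Q0 Q1 : ℕ)
    (h0 : KGoalFn f false g0 Q0) (h1 : KGoalFn f true g1 Q1) :
    Mono (fun b => Q1 * Q0 - (Q1 - g1 b) * (Q0 - g0 b)) ∧
    Submod (fun b => Q1 * Q0 - (Q1 - g1 b) * (Q0 - g0 b)) ∧
    (∀ b, Q1 * Q0 - (Q1 - g1 b) * (Q0 - g0 b) = Q1 * Q0 ↔ (g1 b = Q1 ∨ g0 b = Q0)) := by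
  refine ⟨?_, ?_, ?_⟩
  · intro b b' hext
    have h1m := h1.1 b b' hext
    have h0m := h0.1 b b' hext
    exact Nat.sub_le_sub_left
      (Nat.mul_le_mul (Nat.sub_le_sub_left h1m Q1) (Nat.sub_le_sub_left h0m Q0)) _
  · intro b b' i ℓ hext hbi hb'i
    dsimp only
    have e1 : Extends (Function.update b i (some ℓ)) b := extends_update b i ℓ hbi
    have e2 : Extends (Function.update b' i (some ℓ)) b' := extends_update b' i ℓ hb'i
    have e3 : Extends (Function.update b' i (some ℓ)) (Function.update b i (some ℓ)) :=
      extends_update_mono i ℓ hext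
    -- abbreviations
    have hu1 : g1 b ≤ g1 (Function.update b i (some ℓ)) := h1.1 _ _ e1
    have hu1' : g1 b' ≤ g1 (Function.update b' i (some ℓ)) := h1.1 _ _ e2
    have hv1 : g1 (Function.update b i (some ℓ)) ≤ g1 (Function.update b' i (some ℓ)) := h1.1 _ _ e3
    have hs1 : g1 (Function.update b' i (some ℓ)) + g1 b ≤
        g1 (Function.update b i (some ℓ)) + g1 b' := h1.2.1 b b' i ℓ hext hbi hb'i
    have hq1 : g1 (Function.update b' i (some ℓ)) ≤ Q1 := kgoal_le h1 _
    have hu0 : g0 b ≤ g0 (Function.update b i (some ℓ)) := h0.1 _ _ e1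
    have hu0' : g0 b' ≤ g0 (Function.update b' i (some ℓ)) := h0.1 _ _ e2
    have hv0 : g0 (Function.update b i (some ℓ)) ≤ g0 (Function.update b' i (some ℓ)) := h0.1 _ _ e3
    have hs0 : g0 (Function.update b' i (some ℓ)) + g0 b ≤
        g0 (Function.update b i (some ℓ)) + g0 b' := h0.2.1 b b' i ℓ hext hbi hb'i
    have hq0 : g0 (Function.update b' i (some ℓ)) ≤ Q0 := kgoal_le h0 _
    set u1 := g1 b with hdu1
    set u1' := g1 b' with hdu1'
    set v1 := g1 (Function.update b i (some ℓ)) with hdv1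
    set v1' := g1 (Function.update b' i (some ℓ)) with hdv1'
    set u0 := g0 b with hdu0
    set u0' := g0 b' with hdu0'
    set v0 := g0 (Function.update b i (some ℓ)) with hdv0
    set v0' := g0 (Function.update b' i (some ℓ)) with hdv0'
    have hkey := key_arith (Q1 - v1) (v1 - u1) (Q0 - v0) (v0 - u0)
      (Q1 - v1') (v1' - u1') (Q0 - v0') (v0' - u0')
      (by omega) (by omega) (by omega) (by omega)
    have r1 : Q1 - v1' + (v1' - u1') = Q1 - u1' := by omega
    have r2 : Q0 - v0' + (v0' - u0') = Q0 - u0' := by omega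
    have r3 : Q1 - v1 + (v1 - u1) = Q1 - u1 := by omega
    have r4 : Q0 - v0 + (v0 - u0) = Q0 - u0 := by omega
    rw [r1, r2, r3, r4] at hkey
    have bA : (Q1 - v1') * (Q0 - v0') ≤ Q1 * Q0 :=
      Nat.mul_le_mul (Nat.sub_le _ _) (Nat.sub_le _ _)
    have bB : (Q1 - u1) * (Q0 - u0) ≤ Q1 * Q0 :=
      Nat.mul_le_mul (Nat.sub_le _ _) (Nat.sub_le _ _)
    have bC : (Q1 - v1) * (Q0 - v0) ≤ Q1 * Q0 :=
      Nat.mul_le_mul (Nat.sub_le _ _) (Nat.sub_le _ _)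
    have bD : (Q1 - u1') * (Q0 - u0') ≤ Q1 * Q0 :=
      Nat.mul_le_mul (Nat.sub_le _ _) (Nat.sub_le _ _)
    omega
  · intro b
    have hb1 : g1 b ≤ Q1 := kgoal_le h1 b
    have hb0 : g0 b ≤ Q0 := kgoal_le h0 b
    have hp : (Q1 - g1 b) * (Q0 - g0 b) ≤ Q1 * Q0 :=
      Nat.mul_le_mul (Nat.sub_le _ _) (Nat.sub_le _ _)
    constructor
    · intro h
      have hz : (Q1 - g1 b) * (Q0 - g0 b) = 0 := by omega
      rcases Nat.mul_eq_zero.mp hz with h' | h'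
      · left; omega
      · right; omega
    · intro h
      have hz : (Q1 - g1 b) * (Q0 - g0 b) = 0 := by
        rcases h with h | h <;> simp [h]
      omega

noncomputable def cnt {n : ℕ} (f : (Fin n → Bool) → Bool) (k : Bool)
    (b : Fin n → Option Bool) : ℕ :=
  (Finset.univ.filter (fun x : Fin n → Bool => TExtends x b ∧ f x ≠ k)).card

lemma textends_update_iff {n : ℕ} (b : Fin n → Option Bool) (i : Fin n) (ℓ : Bool)
    (hb : b i = none) (x : Fin n → Bool) :
    TExtends x (Function.update b i (some ℓ)) ↔ TExtends x b ∧ x i = ℓ := by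
  constructor
  · intro h
    refine ⟨fun j v hj => ?_, h i ℓ (by rw [Function.update_self])⟩
    rcases eq_or_ne j i with rfl | hne
    · rw [hb] at hj; exact absurd hj (by simp)
    · exact h j v (by rw [Function.update_of_ne hne]; exact hj)
  · rintro ⟨h, hx⟩ j v hj
    rcases eq_or_ne j i with rfl | hne
    · rw [Function.update_self] at hj
      cases hj; exact hx
    · rw [Function.update_of_ne hne] at hj; exact h j v hj

lemma cnt_mono {n : ℕ} (f : (Fin n → Bool) → Bool) (k : Bool)
    {b b' : Fin n → Option Bool} (h : Extends b' b) : cnt f k b' ≤ cnt f k b := by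
  apply Finset.card_le_card
  intro x hx
  simp only [Finset.mem_filter, Finset.mem_univ, true_and] at hx ⊢
  exact ⟨fun j v hj => hx.1 j v (h j v hj), hx.2⟩

lemma cnt_le {n : ℕ} (f : (Fin n → Bool) → Bool) (k : Bool) (b : Fin n → Option Bool) :
    cnt f k b ≤ 2 ^ n := by
  calc cnt f k b ≤ Finset.univ.card := Finset.card_filter_le _ _
  _ = 2 ^ n := by simp [Finset.card_univ]

lemma cnt_split {n : ℕ} (f : (Fin n → Bool) → Bool) (k : Bool)
    (b : Fin n → Option Bool) (i : Fin n) (ℓ : Bool) (hb : b i = none) :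
    cnt f k b = cnt f k (Function.update b i (some ℓ)) + cnt f k (Function.update b i (some (!ℓ))) := by
  classical
  unfold cnt
  have h1 : ∀ m : Bool,
      (Finset.univ.filter (fun x : Fin n → Bool => TExtends x (Function.update b i (some m)) ∧ f x ≠ k)) =
      (Finset.univ.filter (fun x : Fin n → Bool => TExtends x b ∧ f x ≠ k)).filter
        (fun x => x i = m) := by
    intro m
    rw [Finset.filter_filter]
    apply Finset.filter_congr
    intro x _
    simp only [textends_update_iff b i m hb x]
    tauto
  rw [h1 ℓ, h1 (!ℓ)]
  have h2 : ((Finset.univ.filter (fun x : Fin n → Bool => TExtends x b ∧ f x ≠ k)).filter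
      (fun x => x i = !ℓ)) =
      ((Finset.univ.filter (fun x : Fin n → Bool => TExtends x b ∧ f x ≠ k)).filter
      (fun x => ¬ (x i = ℓ))) := by
    apply Finset.filter_congr
    intro x _
    cases hx : x i <;> cases ℓ <;> simp
  rw [h2, Finset.card_filter_add_card_filter_not]

lemma kgoal_exists {n : ℕ} (f : (Fin n → Bool) → Bool) (k : Bool) :
    ∃ g Q, KGoalFn f k g Q := by
  refine ⟨fun b => 2 ^ n - cnt f k b, 2 ^ n, ?_, ?_, ?_, ?_⟩
  · intro b b' h
    exact Nat.sub_le_sub_left (cnt_mono f k h) _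
  · intro b b' i ℓ hext hbi hb'i
    dsimp only
    have s1 := cnt_split f k b i ℓ hbi
    have s2 := cnt_split f k b' i ℓ hb'i
    have s3 : cnt f k (Function.update b' i (some (!ℓ))) ≤
        cnt f k (Function.update b i (some (!ℓ))) :=
      cnt_mono f k (extends_update_mono i (!ℓ) hext)
    have l1 := cnt_le f k b
    have l2 := cnt_le f k b'
    have l3 := cnt_le f k (Function.update b i (some ℓ))
    have l4 := cnt_le f k (Function.update b' i (some ℓ))
    omega
  · intro b hb
    have : cnt f k b = 0 := by
      unfold cnt
      rw [Finset.card_eq_zero, Finset.filter_eq_empty_iff]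
      intro x _
      simp only [not_and, not_not]
      intro hx
      exact hb x hx
    simp [this]
  · intro b hb
    simp only [IsKCert, not_forall] at hb
    obtain ⟨x, hx, hfx⟩ := hb
    have hpos : 0 < cnt f k b := by
      apply Finset.card_pos.mpr
      exact ⟨x, by simp only [Finset.mem_filter, Finset.mem_univ, true_and]; exact ⟨hx, hfx⟩⟩
    have := cnt_le f k b
    have h2 : 0 < 2 ^ n := Nat.pow_pos (by norm_num)
    show 2 ^ n - cnt f k b < 2 ^ n
    omega

lemma cert_iff {n : ℕ} (f : (Fin n → Bool) → Bool) (b : Fin n → Option Bool) :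
    IsCert f b ↔ (IsKCert f true b ∨ IsKCert f false b) := by
  constructor
  · intro h
    have hx : TExtends (fun i => (b i).getD true) b := by
      intro i v hv; simp [hv]
    cases hfx : f (fun i => (b i).getD true)
    · right; intro x hxb; rw [h x _ hxb hx, hfx]
    · left; intro x hxb; rw [h x _ hxb hx, hfx]
  · rintro (h | h) <;> exact fun x y hx hy => by rw [h x hx, h y hy]

/-- the "OR" construction: given a 0-goal function `g0` and a 1-goal function
`g1` for `f`, the function `g(b) = Q1·Q0 − (Q1 − g1 b)(Q0 − g0 b)` is monotone, submodular,
and attains `Q1·Q0` exactly when `g1` or `g0` attains its goal value.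
Consequently `Γ(f) ≤ Γ¹(f)·Γ⁰(f)`. -/
theorem stmt11 {n : ℕ} (f : (Fin n → Bool) → Bool)
    (g0 g1 : (Fin n → Option Bool) → ℕ) (Q0 Q1 : ℕ)
    (h0 : KGoalFn f false g0 Q0) (h1 : KGoalFn f true g1 Q1) :
    (Mono (fun b => Q1 * Q0 - (Q1 - g1 b) * (Q0 - g0 b)) ∧
     Submod (fun b => Q1 * Q0 - (Q1 - g1 b) * (Q0 - g0 b)) ∧
     (∀ b, Q1 * Q0 - (Q1 - g1 b) * (Q0 - g0 b) = Q1 * Q0 ↔ (g1 b = Q1 ∨ g0 b = Q0))) ∧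
    gamma f ≤ gammaK f true * gammaK f false := by
  refine ⟨combo f g0 g1 Q0 Q1 h0 h1, ?_⟩
  have hne1 : {Q | ∃ g, KGoalFn f true g Q}.Nonempty := by
    obtain ⟨g, Q, h⟩ := kgoal_exists f true; exact ⟨Q, g, h⟩
  have hne0 : {Q | ∃ g, KGoalFn f false g Q}.Nonempty := by
    obtain ⟨g, Q, h⟩ := kgoal_exists f false; exact ⟨Q, g, h⟩
  obtain ⟨G1, hG1⟩ : ∃ g, KGoalFn f true g (gammaK f true) := Nat.sInf_mem hne1
  obtain ⟨G0, hG0⟩ : ∃ g, KGoalFn f false g (gammaK f false) := Nat.sInf_mem hne0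
  obtain ⟨cm, cs, cg⟩ := combo f G0 G1 (gammaK f false) (gammaK f true) hG0 hG1
  apply Nat.sInf_le
  refine ⟨fun b => gammaK f true * gammaK f false -
    (gammaK f true - G1 b) * (gammaK f false - G0 b), cm, cs, ?_⟩
  intro b
  rw [cg b, cert_iff f b]
  constructor
  · rintro (h | h)
    · left; intro x hx
      by_contra hc
      have : ¬ IsKCert f true b := by
        intro hk
        exact hc (hk x hx)
      exact absurd h (Nat.ne_of_lt (hG1.2.2.2 b this))
    · right; intro x hx
      by_contra hc
      have : ¬ IsKCert f false b := by
        intro hk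
        exact hc (hk x hx)
      exact absurd h (Nat.ne_of_lt (hG0.2.2.2 b this))
  · rintro (h | h)
    · exact Or.inl (hG1.2.2.1 b h)
    · exact Or.inr (hG0.2.2.1 b h)
end

section
/- Let f be a Boolean function that is not identically 0 or 1. Then for k∈{0,1}, Γ^k(f) ≤ Γ(f). Specifically, given a goal function g for f with goal value Q, the function g^1 defined by g^1(b) = Q−1 if b contains a 0-certificate of f and g^1(b) = g(b) otherwise is a monotone submodular 1-goal function for f with goal value Q. -/
attribute [local instance] Classical.propDecidable

lemma st18_exists_text {n : ℕ} (b : Fin n → Option Bool) : ∃ x, TExtends x b :=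
  ⟨fun i => (b i).getD false, fun i v h => by simp [h]⟩

lemma st18_text_mono {n : ℕ} {x : Fin n → Bool} {b b' : Fin n → Option Bool}
    (h : Extends b' b) (hx : TExtends x b') : TExtends x b :=
  fun i v hv => hx i v (h i v hv)

lemma st18_kcert_mono {n : ℕ} {f : (Fin n → Bool) → Bool} {k : Bool}
    {b b' : Fin n → Option Bool} (h : Extends b' b) (hc : IsKCert f k b) :
    IsKCert f k b' := fun x hx => hc x (st18_text_mono h hx)

lemma st18_not_both {n : ℕ} {f : (Fin n → Bool) → Bool} {k : Bool}
    {b : Fin n → Option Bool} (h1 : IsKCert f k b) (h2 : IsKCert f (!k) b) : False := by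
  obtain ⟨x, hx⟩ := st18_exists_text b
  have e1 := h1 x hx
  have e2 := h2 x hx
  cases k <;> simp_all

lemma st18_kcert_cert {n : ℕ} {f : (Fin n → Bool) → Bool} {k : Bool}
    {b : Fin n → Option Bool} (h : IsKCert f k b) : IsCert f b :=
  fun x y hx hy => (h x hx).trans (h y hy).symm

lemma st18_cert_cases {n : ℕ} {f : (Fin n → Bool) → Bool} {b : Fin n → Option Bool}
    (h : IsCert f b) : IsKCert f false b ∨ IsKCert f true b := by
  obtain ⟨x, hx⟩ := st18_exists_text b
  cases hfx : f x with
  | false => exact Or.inl (fun y hy => (h y x hy hx).trans hfx)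
  | true => exact Or.inr (fun y hy => (h y x hy hx).trans hfx)

lemma st18_total_cert {n : ℕ} (f : (Fin n → Bool) → Bool) (x : Fin n → Bool) :
    IsCert f (fun i => some (x i)) := by
  intro y z hy hz
  have h1 : y = x := funext fun i => hy i (x i) rfl
  have h2 : z = x := funext fun i => hz i (x i) rfl
  rw [h1, h2]

lemma st18_g_le_Q {n : ℕ} {f : (Fin n → Bool) → Bool} {g : (Fin n → Option Bool) → ℕ}
    {Q : ℕ} (hg : GoalFn f g Q) (b : Fin n → Option Bool) : g b ≤ Q := by
  obtain ⟨x, hx⟩ := st18_exists_text b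
  have hext : Extends (fun i => some (x i)) b := fun i v hv => congrArg some (hx i v hv)
  have h1 := hg.1 b _ hext
  rwa [(hg.2.2 _).2 (st18_total_cert f x)] at h1

lemma st18_one_le_Q {n : ℕ} {f : (Fin n → Bool) → Bool} {g : (Fin n → Option Bool) → ℕ}
    {Q : ℕ} (h0 : ∃ x, f x = false) (h1 : ∃ x, f x = true)
    (hg : GoalFn f g Q) : 1 ≤ Q := by
  obtain ⟨x, hx⟩ := h0
  obtain ⟨y, hy⟩ := h1
  have hnc : ¬ IsCert f (fun _ => none) := by
    intro h
    have := h x y (fun i v hv => by simp at hv) (fun i v hv => by simp at hv)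
    rw [hx, hy] at this
    exact Bool.noConfusion this
  have hle := st18_g_le_Q hg (fun _ => none)
  have hne : g (fun _ => none) ≠ Q := fun h => hnc ((hg.2.2 _).1 h)
  omega

lemma st18_extends_update {n : ℕ} {b : Fin n → Option Bool} {i : Fin n} {ℓ : Bool}
    (hbi : b i = none) : Extends (Function.update b i (some ℓ)) b := by
  intro j v hv
  rcases eq_or_ne j i with rfl | hj
  · rw [hbi] at hv; cases hv
  · rw [Function.update_of_ne hj]; exact hv

lemma st18_extends_update2 {n : ℕ} {b b' : Fin n → Option Bool} {i : Fin n} {ℓ : Bool}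
    (h : Extends b' b) :
    Extends (Function.update b' i (some ℓ)) (Function.update b i (some ℓ)) := by
  intro j v hv
  rcases eq_or_ne j i with rfl | hj
  · rw [Function.update_self] at hv ⊢; exact hv
  · rw [Function.update_of_ne hj] at hv ⊢; exact h j v hv

lemma st18_goal_to_kgoal {n : ℕ} {f : (Fin n → Bool) → Bool} (k : Bool)
    (h0 : ∃ x, f x = false) (h1 : ∃ x, f x = true)
    {g : (Fin n → Option Bool) → ℕ} {Q : ℕ} (hg : GoalFn f g Q) :
    KGoalFn f k (fun b => if IsKCert f (!k) b then Q - 1 else g b) Q := by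
  obtain ⟨hm, hs, hQ⟩ := hg
  have hgle : ∀ b, g b ≤ Q := st18_g_le_Q ⟨hm, hs, hQ⟩
  have hQ1 : 1 ≤ Q := st18_one_le_Q h0 h1 ⟨hm, hs, hQ⟩
  have hcases : ∀ b, IsCert f b → IsKCert f k b ∨ IsKCert f (!k) b := by
    intro b hc
    rcases st18_cert_cases hc with h | h
    · cases k
      · exact Or.inl h
      · exact Or.inr (by simpa using h)
    · cases k
      · exact Or.inr (by simpa using h)
      · exact Or.inl h
  have hlt : ∀ b, ¬ IsKCert f (!k) b → ¬ IsKCert f k b → g b ≤ Q - 1 := by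
    intro b hnk hk
    have hnc : ¬ IsCert f b := fun hc => (hcases b hc).elim hk hnk
    have hne : g b ≠ Q := fun h => hnc ((hQ b).1 h)
    have := hgle b
    omega
  refine ⟨?_, ?_, ?_, ?_⟩
  · -- Mono
    intro b b' hext
    by_cases hb : IsKCert f (!k) b
    · simp only [if_pos hb, if_pos (st18_kcert_mono hext hb)]
      exact le_refl _
    · by_cases hb' : IsKCert f (!k) b'
      · simp only [if_neg hb, if_pos hb']
        apply hlt b hb
        intro hk
        exact st18_not_both (st18_kcert_mono hext hk) hb'
      · simp only [if_neg hb, if_neg hb']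
        exact hm b b' hext
  · -- Submod
    intro b b' i ℓ hext hbi hb'i
    have he_u_b : Extends (Function.update b i (some ℓ)) b := st18_extends_update hbi
    have he_u'_b' : Extends (Function.update b' i (some ℓ)) b' := st18_extends_update hb'i
    have he_u'_u : Extends (Function.update b' i (some ℓ)) (Function.update b i (some ℓ)) :=
      st18_extends_update2 hext
    by_cases hcb : IsKCert f (!k) b
    · have hcu := st18_kcert_mono he_u_b hcb
      have hcb' := st18_kcert_mono hext hcb
      have hcu' := st18_kcert_mono he_u'_b' hcb'
      simp only [if_pos hcb, if_pos hcu, if_pos hcb', if_pos hcu']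
      exact le_refl _
    · by_cases hcu' : IsKCert f (!k) (Function.update b' i (some ℓ))
      · simp only [if_pos hcu', if_neg hcb]
        by_cases hcu : IsKCert f (!k) (Function.update b i (some ℓ))
        · by_cases hcb' : IsKCert f (!k) b'
          · simp only [if_pos hcu, if_pos hcb']
            have hb1 : g b ≤ Q - 1 := by
              apply hlt b hcb
              intro hk
              exact st18_not_both (st18_kcert_mono he_u_b hk) hcu
            omega
          · simp only [if_pos hcu, if_neg hcb']
            have := hm b b' hext
            omega
        · by_cases hcb' : IsKCert f (!k) b'
          · simp only [if_neg hcu, if_pos hcb']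
            have := hm b _ he_u_b
            omega
          · simp only [if_neg hcu, if_neg hcb']
            have hsub := hs b b' i ℓ hext hbi hb'i
            have hq' : g (Function.update b' i (some ℓ)) = Q :=
              (hQ _).2 (st18_kcert_cert hcu')
            omega
      · have hcu : ¬ IsKCert f (!k) (Function.update b i (some ℓ)) :=
          fun h => hcu' (st18_kcert_mono he_u'_u h)
        have hcb' : ¬ IsKCert f (!k) b' := fun h => hcu' (st18_kcert_mono he_u'_b' h)
        simp only [if_neg hcb, if_neg hcu, if_neg hcb', if_neg hcu']
        exact hs b b' i ℓ hext hbi hb'i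
  · intro b hb
    have hnk : ¬ IsKCert f (!k) b := fun h => st18_not_both hb h
    simp only [if_neg hnk]
    exact (hQ b).2 (st18_kcert_cert hb)
  · intro b hb
    by_cases hnk : IsKCert f (!k) b
    · simp only [if_pos hnk]; omega
    · simp only [if_neg hnk]
      have := hlt b hnk hb
      omega

noncomputable def st18Nk {n : ℕ} (f : (Fin n → Bool) → Bool) (k : Bool)
    (b : Fin n → Option Bool) : ℕ :=
  (Finset.univ.filter (fun x : Fin n → Bool => TExtends x b ∧ f x = k)).card

lemma st18Nk_mono {n : ℕ} {f : (Fin n → Bool) → Bool} {k : Bool}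
    {b b' : Fin n → Option Bool} (h : Extends b' b) : st18Nk f k b' ≤ st18Nk f k b := by
  apply Finset.card_le_card
  intro x hx
  simp only [Finset.mem_filter, Finset.mem_univ, true_and] at hx ⊢
  exact ⟨st18_text_mono h hx.1, hx.2⟩

lemma st18Nk_le {n : ℕ} (f : (Fin n → Bool) → Bool) (k : Bool) (b : Fin n → Option Bool) :
    st18Nk f k b ≤ 2 ^ n := by
  calc st18Nk f k b ≤ Finset.univ.card := Finset.card_filter_le _ _
    _ = 2 ^ n := by simp [Finset.card_univ]

lemma st18_text_update {n : ℕ} {b : Fin n → Option Bool} {i : Fin n} {ℓ : Bool}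
    (hbi : b i = none) (x : Fin n → Bool) :
    TExtends x (Function.update b i (some ℓ)) ↔ TExtends x b ∧ x i = ℓ := by
  constructor
  · intro h
    refine ⟨fun j v hv => ?_, h i ℓ (Function.update_self ..)⟩
    rcases eq_or_ne j i with rfl | hj
    · rw [hbi] at hv; cases hv
    · exact h j v (by rw [Function.update_of_ne hj]; exact hv)
  · rintro ⟨h, hi⟩ j v hv
    rcases eq_or_ne j i with rfl | hj
    · rw [Function.update_self] at hv
      cases hv
      exact hi
    · exact h j v (by rwa [Function.update_of_ne hj] at hv)

lemma st18Nk_split {n : ℕ} {f : (Fin n → Bool) → Bool} {b : Fin n → Option Bool}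
    {i : Fin n} (hbi : b i = none) (k ℓ : Bool) :
    st18Nk f k (Function.update b i (some ℓ)) + st18Nk f k (Function.update b i (some (!ℓ)))
      = st18Nk f k b := by
  classical
  have key := Finset.card_filter_add_card_filter_not
    (s := Finset.univ.filter (fun x : Fin n → Bool => TExtends x b ∧ f x = k))
    (p := fun x => x i = ℓ)
  rw [Finset.filter_filter, Finset.filter_filter] at key
  have e1 : (Finset.univ.filter (fun x : Fin n → Bool =>
      TExtends x (Function.update b i (some ℓ)) ∧ f x = k))
      = Finset.univ.filter (fun x : Fin n → Bool => (TExtends x b ∧ f x = k) ∧ x i = ℓ) := by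
    ext x
    simp only [Finset.mem_filter, Finset.mem_univ, true_and, st18_text_update hbi]
    tauto
  have e2 : (Finset.univ.filter (fun x : Fin n → Bool =>
      TExtends x (Function.update b i (some (!ℓ))) ∧ f x = k))
      = Finset.univ.filter (fun x : Fin n → Bool => (TExtends x b ∧ f x = k) ∧ ¬ x i = ℓ) := by
    ext x
    simp only [Finset.mem_filter, Finset.mem_univ, true_and, st18_text_update hbi]
    constructor
    · rintro ⟨⟨h1, h2⟩, h3⟩
      refine ⟨⟨h1, h3⟩, ?_⟩
      rw [h2]; cases ℓ <;> simp
    · rintro ⟨⟨h1, h3⟩, h2⟩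
      refine ⟨⟨h1, ?_⟩, h3⟩
      cases hxi : x i <;> cases ℓ <;> simp_all
  rw [st18Nk, st18Nk, st18Nk, e1, e2]
  simpa using key

lemma st18Nk_eq_zero {n : ℕ} {f : (Fin n → Bool) → Bool} {k : Bool}
    {b : Fin n → Option Bool} : st18Nk f k b = 0 ↔ IsKCert f (!k) b := by
  rw [st18Nk, Finset.card_eq_zero, Finset.filter_eq_empty_iff]
  constructor
  · intro h x hx
    have hh := h (Finset.mem_univ x)
    push_neg at hh
    have := hh hx
    cases k <;> simp_all
  · intro h x _
    rintro ⟨hx, hfx⟩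
    have := h x hx
    cases k <;> simp_all

lemma st18_arith (T A B C D : ℕ) (hA : A ≤ T) (hB : B ≤ T) (hC : C ≤ T) (hD : D ≤ T)
    (key : A + D ≤ C + B) : T - C + (T - B) ≤ T - A + (T - D) := by omega

lemma st18_gex_goal {n : ℕ} (f : (Fin n → Bool) → Bool) :
    GoalFn f (fun b => 4 ^ n - st18Nk f false b * st18Nk f true b) (4 ^ n) := by
  have h4 : (4 : ℕ) ^ n = 2 ^ n * 2 ^ n := by
    rw [← Nat.mul_pow]
  have hPle : ∀ b : Fin n → Option Bool, st18Nk f false b * st18Nk f true b ≤ 4 ^ n := by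
    intro b
    rw [h4]
    exact Nat.mul_le_mul (st18Nk_le f false b) (st18Nk_le f true b)
  refine ⟨?_, ?_, ?_⟩
  · intro b b' hext
    exact Nat.sub_le_sub_left
      (Nat.mul_le_mul (st18Nk_mono hext) (st18Nk_mono hext)) _
  · intro b b' i ℓ hext hbi hb'i
    dsimp only
    have s0 := st18Nk_split (f := f) hbi false ℓ
    have s1 := st18Nk_split (f := f) hbi true ℓ
    have s0' := st18Nk_split (f := f) hb'i false ℓ
    have s1' := st18Nk_split (f := f) hb'i true ℓ
    set p0 := st18Nk f false (Function.update b i (some ℓ)) with hp0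
    set q0 := st18Nk f false (Function.update b i (some (!ℓ))) with hq0
    set p1 := st18Nk f true (Function.update b i (some ℓ)) with hp1
    set q1 := st18Nk f true (Function.update b i (some (!ℓ))) with hq1
    set p0' := st18Nk f false (Function.update b' i (some ℓ)) with hp0'
    set q0' := st18Nk f false (Function.update b' i (some (!ℓ))) with hq0'
    set p1' := st18Nk f true (Function.update b' i (some ℓ)) with hp1'
    set q1' := st18Nk f true (Function.update b' i (some (!ℓ))) with hq1'
    have m0 : p0' ≤ p0 := st18Nk_mono (st18_extends_update2 hext)
    have m1 : p1' ≤ p1 := st18Nk_mono (st18_extends_update2 hext)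
    have m2 : q0' ≤ q0 := st18Nk_mono (st18_extends_update2 hext)
    have m3 : q1' ≤ q1 := st18Nk_mono (st18_extends_update2 hext)
    have l0 : p0 ≤ 2 ^ n := st18Nk_le f false _
    have l1 : p1 ≤ 2 ^ n := st18Nk_le f true _
    have l0' : p0' ≤ 2 ^ n := st18Nk_le f false _
    have l1' : p1' ≤ 2 ^ n := st18Nk_le f true _
    have lB0 : p0 + q0 ≤ 2 ^ n := s0 ▸ st18Nk_le f false b
    have lB1 : p1 + q1 ≤ 2 ^ n := s1 ▸ st18Nk_le f true b
    have lD0 : p0' + q0' ≤ 2 ^ n := s0' ▸ st18Nk_le f false b'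
    have lD1 : p1' + q1' ≤ 2 ^ n := s1' ▸ st18Nk_le f true b'
    have key : p0 * p1 + (p0' + q0') * (p1' + q1')
        ≤ p0' * p1' + (p0 + q0) * (p1 + q1) := by
      have e1 : p0' * q1' ≤ p0 * q1 := Nat.mul_le_mul m0 m3
      have e2 : q0' * p1' ≤ q0 * p1 := Nat.mul_le_mul m2 m1
      have e3 : q0' * q1' ≤ q0 * q1 := Nat.mul_le_mul m2 m3
      nlinarith
    rw [← s0, ← s1, ← s0', ← s1']
    exact st18_arith (4 ^ n) (p0 * p1) ((p0 + q0) * (p1 + q1)) (p0' * p1')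
      ((p0' + q0') * (p1' + q1'))
      (by rw [h4]; exact Nat.mul_le_mul l0 l1)
      (by rw [h4]; exact Nat.mul_le_mul lB0 lB1)
      (by rw [h4]; exact Nat.mul_le_mul l0' l1')
      (by rw [h4]; exact Nat.mul_le_mul lD0 lD1)
      key
  · intro b
    dsimp only
    have hpos : 0 < (4 : ℕ) ^ n := pow_pos (by norm_num) n
    have hble := hPle b
    constructor
    · intro h
      have hz : st18Nk f false b * st18Nk f true b = 0 := by omega
      rcases Nat.mul_eq_zero.mp hz with h' | h'
      · exact st18_kcert_cert (st18Nk_eq_zero.mp h')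
      · exact st18_kcert_cert (st18Nk_eq_zero.mp h')
    · intro h
      rcases st18_cert_cases h with h' | h'
      · have hz : st18Nk f true b = 0 := st18Nk_eq_zero.mpr (by simpa using h')
        rw [hz, Nat.mul_zero, Nat.sub_zero]
      · have hz : st18Nk f false b = 0 := st18Nk_eq_zero.mpr (by simpa using h')
        rw [hz, Nat.zero_mul, Nat.sub_zero]

/-- if `f` is not constant then `Γᵏ(f) ≤ Γ(f)` for `k ∈ {0,1}`; specifically,
from a goal function `g` for `f` with goal value `Q`, the function equal to `Q − 1` on
partial assignments containing a 0-certificate and to `g` elsewhere is a 1-goal function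
for `f` with goal value `Q`. -/
theorem stmt18 {n : ℕ} (f : (Fin n → Bool) → Bool)
    (h0 : ∃ x, f x = false) (h1 : ∃ x, f x = true)
    (g : (Fin n → Option Bool) → ℕ) (Q : ℕ) (hg : GoalFn f g Q) :
    KGoalFn f true (fun b => if IsKCert f false b then Q - 1 else g b) Q ∧
    ∀ k : Bool, gammaK f k ≤ gamma f := by
  constructor
  · have h := st18_goal_to_kgoal true h0 h1 hg
    simpa using h
  · intro k
    unfold gammaK gamma
    have hne : {Q | ∃ g, GoalFn f g Q}.Nonempty :=
      ⟨4 ^ n, fun b => 4 ^ n - st18Nk f false b * st18Nk f true b, st18_gex_goal f⟩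
    obtain ⟨g', hg'⟩ := Nat.sInf_mem hne
    have hk := st18_goal_to_kgoal k h0 h1 hg'
    exact Nat.sInf_le ⟨_, hk⟩
end
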